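/- arXiv:2309.02829 — 2 statements merged into one kernel-verified Lean document; each statement's English description precedes it below -/
import Mathlib

section
/- Let P be a Markov kernel on a measurable space E, let B ⊆ E be measurable, and let g : E → ℝ be bounded measurable with 0 ≤ g ≤ 1 and g(x) = 1 for every x ∉ B. Let Q be the sub-kernel Q(x,A) := P(x, A ∩ B^c). If (w, λ) is a bounded MPE solution for g, then for every x ∈ E and every n ≥ 0, (Q^n 𝟙)(x) ≤ e^{2‖w‖+1}·e^{−(1−λ)n}; that is, the probability that the chain started at x avoids B at each of the times 1, …, n is at most e^{2‖w‖+1}·e^{−(1−λ)n}. -/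
open MeasureTheory ProbabilityTheory

/-- `staySeq P C n x = (Q_C^n 𝟙)(x)`, the probability that the chain with kernel `P` started
at `x` lies in `C` at each of the times `1, …, n`, where `Q_C(x,A) = P(x, A ∩ C)` is the
sub-kernel associated with `C`. -/
noncomputable def staySeq {E : Type*} [MeasurableSpace E] (P : Kernel E E) (C : Set E) :
    ℕ → E → ℝ
  | 0 => fun _ => 1
  | n + 1 => fun x => ∫ y in C, staySeq P C n y ∂(P x)

/-- If `0 ≤ g ≤ 1`, `g = 1` off `B`, and `(w, lam)` is a bounded MPE solution for `g`, then
the probability of avoiding `B` during the first `n` steps is at most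
`e^{2‖w‖+1} e^{-(1-lam) n}`. -/
theorem avoidance_probability_bound {E : Type*} [MeasurableSpace E]
    (P : Kernel E E) [IsMarkovKernel P]
    (B : Set E) (hB : MeasurableSet B)
    (g : E → ℝ) (hg_meas : Measurable g)
    (hg_nonneg : ∀ x, 0 ≤ g x) (hg_le_one : ∀ x, g x ≤ 1)
    (hg_out : ∀ x, x ∉ B → g x = 1)
    (w : E → ℝ) (hw_meas : Measurable w) (Cw : ℝ) (hw_bdd : ∀ x, |w x| ≤ Cw)
    (lam : ℝ)
    (hMPE : ∀ x, w x = g x - lam + Real.log (∫ y, Real.exp (w y) ∂(P x))) :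
    ∀ x : E, ∀ n : ℕ,
      staySeq P Bᶜ n x ≤ Real.exp (2 * (⨆ x, |w x|) + 1) * Real.exp (-(1 - lam) * n) := by
  set M := ⨆ x, |w x| with hMdef
  have hbdd : BddAbove (Set.range fun x => |w x|) := ⟨Cw, by rintro _ ⟨x, rfl⟩; exact hw_bdd x⟩
  have hM : ∀ x, |w x| ≤ M := fun x => le_ciSup hbdd x
  have hexp_meas : Measurable fun y => Real.exp (w y) := hw_meas.exp
  have hint : ∀ x, Integrable (fun y => Real.exp (w y)) (P x) := fun x =>
    (integrable_const (Real.exp M)).mono' hexp_meas.aestronglyMeasurable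
      (Filter.Eventually.of_forall fun y => by
        rw [Real.norm_eq_abs, abs_of_pos (Real.exp_pos _)]
        exact Real.exp_le_exp.2 ((le_abs_self _).trans (hM y)))
  have hIpos : ∀ x, 0 < ∫ y, Real.exp (w y) ∂(P x) := fun x => by
    have h1 : Real.exp (-M) ≤ ∫ y, Real.exp (w y) ∂(P x) := by
      calc Real.exp (-M) = ∫ _, Real.exp (-M) ∂(P x) := by simp
        _ ≤ _ := integral_mono (integrable_const _) (hint x)
            (fun y => Real.exp_le_exp.2 (neg_le_of_abs_le (hM y)))
    exact lt_of_lt_of_le (Real.exp_pos _) h1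
  have hKey : ∀ x, ∫ y, Real.exp (w y) ∂(P x) = Real.exp (w x - g x + lam) := fun x => by
    have h1 := hMPE x
    have h2 := Real.exp_log (hIpos x)
    rw [← h2]; congr 1; linarith
  -- measurability of staySeq
  have hstay_meas : ∀ n, Measurable (staySeq P Bᶜ n) := by
    intro n
    induction n with
    | zero => exact measurable_const
    | succ n ih =>
      have heq : staySeq P Bᶜ (n + 1)
          = fun x => ∫ y, (Bᶜ).indicator (staySeq P Bᶜ n) y ∂(P x) := by
        funext x
        simp only [staySeq]
        rw [integral_indicator hB.compl]
      rw [heq]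
      have hsm : StronglyMeasurable fun p : E × E => (Bᶜ).indicator (staySeq P Bᶜ n) p.2 :=
        ((ih.indicator hB.compl).comp measurable_snd).stronglyMeasurable
      exact (hsm.integral_kernel_prod_right').measurable
  -- nonnegativity and ≤ 1
  have hstay_nonneg : ∀ n x, 0 ≤ staySeq P Bᶜ n x := by
    intro n
    induction n with
    | zero => intro x; simp [staySeq]
    | succ n ih =>
      intro x
      exact setIntegral_nonneg hB.compl (fun y _ => ih y)
  have hstay_le_one : ∀ n x, staySeq P Bᶜ n x ≤ 1 := by
    intro n
    induction n with
    | zero => intro x; simp [staySeq]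
    | succ n ih =>
      intro x
      have hint1 : IntegrableOn (staySeq P Bᶜ n) Bᶜ (P x) := by
        refine (integrableOn_const (measure_ne_top _ _) :
            IntegrableOn (fun _ => (1 : ℝ)) Bᶜ (P x)).mono'
          ((hstay_meas n).aestronglyMeasurable.restrict)
          (Filter.Eventually.of_forall fun y => ?_)
        rw [Real.norm_eq_abs, abs_of_nonneg (hstay_nonneg n y)]
        exact ih y
      calc staySeq P Bᶜ (n + 1) x = ∫ y in Bᶜ, staySeq P Bᶜ n y ∂(P x) := rfl
        _ ≤ ∫ _ in Bᶜ, (1 : ℝ) ∂(P x) := by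
            refine setIntegral_mono_on hint1
              (integrableOn_const (measure_ne_top _ _)) hB.compl fun y _ => ih y
        _ = (P x Bᶜ).toReal := by simp [Measure.real]
        _ ≤ 1 := by
            rw [show (1 : ℝ) = (1 : ENNReal).toReal by simp]
            exact ENNReal.toReal_mono ENNReal.one_ne_top prob_le_one
  have hstay_int : ∀ n x, IntegrableOn (staySeq P Bᶜ n) Bᶜ (P x) := by
    intro n x
    refine (integrableOn_const (measure_ne_top _ _) :
        IntegrableOn (fun _ => (1 : ℝ)) Bᶜ (P x)).mono'
      ((hstay_meas n).aestronglyMeasurable.restrict) (Filter.Eventually.of_forall fun y => ?_)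
    rw [Real.norm_eq_abs, abs_of_nonneg (hstay_nonneg n y)]
    exact hstay_le_one n y
  have hexp_int_on : ∀ x, IntegrableOn (fun y => Real.exp (w y)) Bᶜ (P x) :=
    fun x => (hint x).integrableOn
  -- main claim on Bᶜ
  have claim : ∀ n, ∀ x ∉ B,
      staySeq P Bᶜ n x ≤ Real.exp M * Real.exp ((lam - 1) * n) * Real.exp (w x) := by
    intro n
    induction n with
    | zero =>
      intro x hx
      have h0 : (0 : ℝ) ≤ M + w x := by
        have := neg_le_of_abs_le (hM x); linarith
      calc staySeq P Bᶜ 0 x = 1 := rfl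
        _ ≤ Real.exp (M + w x) := by
            calc (1 : ℝ) = Real.exp 0 := by simp
              _ ≤ Real.exp (M + w x) := Real.exp_le_exp.2 h0
        _ = Real.exp M * Real.exp (0 : ℝ) * Real.exp (w x) := by
            rw [Real.exp_add]; simp
        _ = Real.exp M * Real.exp ((lam - 1) * (0 : ℕ)) * Real.exp (w x) := by norm_num
    | succ n ih =>
      intro x hx
      have hgx : g x = 1 := hg_out x hx
      calc staySeq P Bᶜ (n + 1) x = ∫ y in Bᶜ, staySeq P Bᶜ n y ∂(P x) := rfl
        _ ≤ ∫ y in Bᶜ, Real.exp M * Real.exp ((lam - 1) * n) * Real.exp (w y) ∂(P x) := by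
            refine setIntegral_mono_on (hstay_int n x)
              (((hexp_int_on x).const_mul _)) hB.compl fun y hy => ih y hy
        _ = Real.exp M * Real.exp ((lam - 1) * n) * ∫ y in Bᶜ, Real.exp (w y) ∂(P x) := by
            rw [integral_const_mul]
        _ ≤ Real.exp M * Real.exp ((lam - 1) * n) * ∫ y, Real.exp (w y) ∂(P x) := by
            refine mul_le_mul_of_nonneg_left ?_ (by positivity)
            exact setIntegral_le_integral (hint x)
              (Filter.Eventually.of_forall fun y => (Real.exp_pos _).le)
        _ = Real.exp M * Real.exp ((lam - 1) * n) * Real.exp (w x - g x + lam) := by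
            rw [hKey x]
        _ = Real.exp M * Real.exp ((lam - 1) * (n + 1 : ℕ)) * Real.exp (w x) := by
            rw [hgx, ← Real.exp_add, ← Real.exp_add, ← Real.exp_add, ← Real.exp_add]
            congr 1
            push_cast
            ring
  -- conclude
  intro x n
  have hM0 : 0 ≤ M := le_trans (abs_nonneg _) (hM x)
  cases n with
  | zero =>
    calc staySeq P Bᶜ 0 x = 1 := rfl
      _ ≤ Real.exp (2 * M + 1) := Real.one_le_exp (by linarith)
      _ = Real.exp (2 * M + 1) * Real.exp (-(1 - lam) * (0 : ℕ)) := by norm_num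
  | succ n =>
    calc staySeq P Bᶜ (n + 1) x = ∫ y in Bᶜ, staySeq P Bᶜ n y ∂(P x) := rfl
      _ ≤ ∫ y in Bᶜ, Real.exp M * Real.exp ((lam - 1) * n) * Real.exp (w y) ∂(P x) := by
          refine setIntegral_mono_on (hstay_int n x)
            (((hexp_int_on x).const_mul _)) hB.compl fun y hy => claim n y hy
      _ = Real.exp M * Real.exp ((lam - 1) * n) * ∫ y in Bᶜ, Real.exp (w y) ∂(P x) := by
          rw [integral_const_mul]
      _ ≤ Real.exp M * Real.exp ((lam - 1) * n) * ∫ y, Real.exp (w y) ∂(P x) := by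
          refine mul_le_mul_of_nonneg_left ?_ (by positivity)
          exact setIntegral_le_integral (hint x)
            (Filter.Eventually.of_forall fun y => (Real.exp_pos _).le)
      _ = Real.exp M * Real.exp ((lam - 1) * n) * Real.exp (w x - g x + lam) := by
          rw [hKey x]
      _ ≤ Real.exp M * Real.exp ((lam - 1) * n) * Real.exp (M + lam) := by
          refine mul_le_mul_of_nonneg_left (Real.exp_le_exp.2 ?_) (by positivity)
          have h1 := le_of_abs_le (hM x)
          have h2 := hg_nonneg x
          linarith
      _ = Real.exp (2 * M + 1) * Real.exp (-(1 - lam) * (n + 1 : ℕ)) := by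
          rw [← Real.exp_add, ← Real.exp_add, ← Real.exp_add]
          congr 1
          push_cast
          ring
end

section
/- Let P be a Markov kernel on a measurable space E, let B ⊆ E be measurable, and let g : E → ℝ be bounded measurable with 0 ≤ g ≤ 1 and g(x) = 1 for every x ∉ B. Let Q be the sub-kernel Q(x,A) := P(x, A ∩ B^c). Suppose that for every n ≥ 0, sup_{x∈E} (Q^n 𝟙)(x) = 1, i.e. the infimum over starting points of the probability of hitting B within the first n steps is 0 for every n. Then there is no bounded MPE solution (w, λ) for g with λ < 1. -/
open MeasureTheory ProbabilityTheory

/-- If `0 ≤ g ≤ 1`, `g = 1` off `B`, and for every `n` the supremum over starting points of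
the probability of avoiding `B` during the first `n` steps equals `1` (i.e. the infimum of
the probability of hitting `B` within `n` steps is `0`), then no bounded MPE solution
`(w, lam)` for `g` with `lam < 1` can exist. -/
theorem no_mpe_solution_of_slow_hitting {E : Type*} [MeasurableSpace E]
    (P : Kernel E E) [IsMarkovKernel P]
    (B : Set E) (hB : MeasurableSet B)
    (g : E → ℝ) (hg_meas : Measurable g)
    (hg_nonneg : ∀ x, 0 ≤ g x) (hg_le_one : ∀ x, g x ≤ 1)
    (hg_out : ∀ x, x ∉ B → g x = 1)
    (hslow : ∀ n : ℕ, (⨆ x : E, staySeq P Bᶜ n x) = 1) :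
    ¬ ∃ (w : E → ℝ) (lam : ℝ), Measurable w ∧ (∃ C : ℝ, ∀ x, |w x| ≤ C) ∧
        (∀ x : E, w x = g x - lam + Real.log (∫ y, Real.exp (w y) ∂(P x))) ∧ lam < 1 := by
  rintro ⟨w, lam, hw_meas, ⟨C, hC⟩, heq, hlam⟩
  -- E is nonempty
  have hE : Nonempty E := by
    by_contra h
    rw [not_nonempty_iff] at h
    have h0 := hslow 0
    rw [Real.iSup_of_isEmpty] at h0
    norm_num at h0
  have hC0 : 0 ≤ C := le_trans (abs_nonneg _) (hC hE.some)
  set I : E → ℝ := fun x => ∫ y, Real.exp (w y) ∂(P x) with hI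
  have hwle : ∀ y, w y ≤ C := fun y => (abs_le.mp (hC y)).2
  have hwge : ∀ y, -C ≤ w y := fun y => (abs_le.mp (hC y)).1
  have hint : ∀ x, Integrable (fun y => Real.exp (w y)) (P x) := by
    intro x
    refine Integrable.mono' (integrable_const (Real.exp C)) hw_meas.exp.aestronglyMeasurable ?_
    refine ae_of_all _ fun y => ?_
    rw [Real.norm_eq_abs, abs_of_pos (Real.exp_pos _)]
    exact Real.exp_le_exp.mpr (hwle y)
  have hIlb : ∀ x, Real.exp (-C) ≤ I x := by
    intro x
    calc Real.exp (-C) = ∫ _, Real.exp (-C) ∂(P x) := by simp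
    _ ≤ I x := integral_mono (integrable_const _) (hint x)
        fun y => Real.exp_le_exp.mpr (hwge y)
  have hIub : ∀ x, I x ≤ Real.exp C := by
    intro x
    calc I x ≤ ∫ _, Real.exp C ∂(P x) :=
          integral_mono (hint x) (integrable_const _) fun y => Real.exp_le_exp.mpr (hwle y)
    _ = Real.exp C := by simp
  have hIpos : ∀ x, 0 < I x := fun x => lt_of_lt_of_le (Real.exp_pos _) (hIlb x)
  -- properties of staySeq
  have hS_nonneg : ∀ n x, 0 ≤ staySeq P Bᶜ n x := by
    intro n
    induction n with
    | zero => intro x; simp [staySeq]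
    | succ n ih =>
      intro x
      have : staySeq P Bᶜ (n + 1) x = ∫ y in Bᶜ, staySeq P Bᶜ n y ∂(P x) := rfl
      rw [this]
      exact integral_nonneg fun y => ih y
  have hS_meas : ∀ n, Measurable (staySeq P Bᶜ n) := by
    intro n
    induction n with
    | zero => exact measurable_const
    | succ n ih =>
      have : staySeq P Bᶜ (n + 1)
          = fun x => ∫ y, (Bᶜ).indicator (staySeq P Bᶜ n) y ∂(P x) := by
        funext x
        rw [integral_indicator hB.compl]
        rfl
      rw [this]
      have hsm : StronglyMeasurable
          fun p : E × E => (Bᶜ).indicator (staySeq P Bᶜ n) p.2 :=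
        ((ih.indicator hB.compl).comp measurable_snd).stronglyMeasurable
      exact hsm.integral_kernel_prod_right'.measurable
  have hS_le_one : ∀ n x, staySeq P Bᶜ n x ≤ 1 := by
    intro n
    induction n with
    | zero => intro x; simp [staySeq]
    | succ n ih =>
      intro x
      have h1 : staySeq P Bᶜ (n + 1) x = ∫ y in Bᶜ, staySeq P Bᶜ n y ∂(P x) := rfl
      rw [h1]
      calc ∫ y in Bᶜ, staySeq P Bᶜ n y ∂(P x)
          ≤ ∫ _ in Bᶜ, (1 : ℝ) ∂(P x) := by
            refine setIntegral_mono_on ?_ ((integrableOn_const_iff).mpr (Or.inr ?_)) hB.compl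
              fun y _ => ih y
            · refine Integrable.mono' (integrable_const 1)
                ((hS_meas n).aestronglyMeasurable.restrict) ?_
              refine ae_of_all _ fun y => ?_
              rw [Real.norm_eq_abs, abs_of_nonneg (hS_nonneg n y)]
              exact ih y
            · exact lt_of_le_of_lt (measure_mono (Set.subset_univ _)) (by simp)
      _ = ((P x) Bᶜ).toReal := by simp [Measure.real]
      _ ≤ 1 := by
            have := measure_mono (Set.subset_univ Bᶜ) (μ := P x)
            simp only [measure_univ] at this
            exact ENNReal.toReal_le_of_le_ofReal zero_le_one (by simpa using this)
  have hSint : ∀ n x, Integrable (staySeq P Bᶜ n) ((P x).restrict Bᶜ) := by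
    intro n x
    refine Integrable.mono' (integrable_const 1)
      ((hS_meas n).aestronglyMeasurable.restrict) ?_
    refine ae_of_all _ fun y => ?_
    rw [Real.norm_eq_abs, abs_of_nonneg (hS_nonneg n y)]
    exact hS_le_one n y
  -- main inductive bound
  have main : ∀ (n : ℕ) (x : E), Real.exp (-C) * Real.exp ((n : ℝ) * (1 - lam)) * staySeq P Bᶜ n x ≤ I x := by
    intro n
    induction n with
    | zero => intro x; simpa [staySeq] using hIlb x
    | succ n ih =>
      intro x
      have hexp : ∀ y ∈ Bᶜ,
          Real.exp (1 - lam) * (Real.exp (-C) * Real.exp (n * (1 - lam)) * staySeq P Bᶜ n y)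
            ≤ Real.exp (w y) := by
        intro y hy
        have hwy : w y = 1 - lam + Real.log (I y) := by
          have h := heq y
          rw [hg_out y hy] at h
          linarith
        have hrw : Real.exp (w y) = Real.exp (1 - lam) * I y := by
          rw [hwy, Real.exp_add, Real.exp_log (hIpos y)]
        rw [hrw]
        exact mul_le_mul_of_nonneg_left (ih y) (Real.exp_pos _).le
      have hSrec : staySeq P Bᶜ (n + 1) x = ∫ y in Bᶜ, staySeq P Bᶜ n y ∂(P x) := rfl
      have hconst : Real.exp (-C) * Real.exp ((n + 1 : ℕ) * (1 - lam))
          = Real.exp (1 - lam) * (Real.exp (-C) * Real.exp (n * (1 - lam))) := by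
        rw [← Real.exp_add, ← Real.exp_add, ← Real.exp_add]
        push_cast
        ring_nf
      calc Real.exp (-C) * Real.exp ((n + 1 : ℕ) * (1 - lam)) * staySeq P Bᶜ (n + 1) x
          = ∫ y in Bᶜ, Real.exp (1 - lam) *
              (Real.exp (-C) * Real.exp (n * (1 - lam)) * staySeq P Bᶜ n y) ∂(P x) := by
            rw [hSrec, hconst, mul_assoc, ← integral_const_mul, ← integral_const_mul]
      _ ≤ ∫ y in Bᶜ, Real.exp (w y) ∂(P x) := by
            refine setIntegral_mono_on ?_ ((hint x).integrableOn) hB.compl hexp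
            exact ((hSint n x).const_mul _).const_mul _
      _ ≤ I x := setIntegral_le_integral (hint x)
            (ae_of_all _ fun y => (Real.exp_pos _).le)
  -- derive the contradiction
  obtain ⟨n, hn⟩ := exists_nat_gt (2 * C / (1 - lam))
  have hpos : (0 : ℝ) < 1 - lam := by linarith
  have h1 : 2 * C < (n : ℝ) * (1 - lam) := by
    rw [div_lt_iff₀ hpos] at hn
    linarith
  have hsup : (⨆ x, staySeq P Bᶜ n x) ≤ Real.exp (2 * C - n * (1 - lam)) := by
    refine ciSup_le fun x => ?_
    have hm := (main n x).trans (hIub x)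
    have hK : 0 < Real.exp (-C) * Real.exp ((n : ℝ) * (1 - lam)) :=
      mul_pos (Real.exp_pos _) (Real.exp_pos _)
    have : staySeq P Bᶜ n x
        ≤ Real.exp C / (Real.exp (-C) * Real.exp ((n : ℝ) * (1 - lam))) := by
      rw [le_div_iff₀ hK]
      calc staySeq P Bᶜ n x * (Real.exp (-C) * Real.exp ((n : ℝ) * (1 - lam)))
          = Real.exp (-C) * Real.exp ((n : ℝ) * (1 - lam)) * staySeq P Bᶜ n x := by ring
      _ ≤ Real.exp C := hm
    refine this.trans (le_of_eq ?_)
    rw [← Real.exp_add, ← Real.exp_sub]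
    ring_nf
  rw [hslow n] at hsup
  have : Real.exp (2 * C - ↑n * (1 - lam)) < 1 := Real.exp_lt_one_iff.mpr (by linarith)
  linarith
end
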